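/- For all real Δ > 0 and λ ∈ (0,1), it holds that exp(-Δ²/2)·(1-λ) < 1, and moreover 1/(1 − exp(-Δ²/2)·(1-λ)) ≤ (Δ² + 2)/(Δ² + 2λ). -/
import Mathlib

theorem stmt_3 (Δ lam : ℝ) (hΔ : 0 < Δ) (hl0 : 0 < lam) (hl1 : lam < 1) :
    Real.exp (-Δ ^ 2 / 2) * (1 - lam) < 1 ∧
      1 / (1 - Real.exp (-Δ ^ 2 / 2) * (1 - lam)) ≤ (Δ ^ 2 + 2) / (Δ ^ 2 + 2 * lam) := by
  set x : ℝ := Δ ^ 2 / 2 with hx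
  have hx0 : 0 < x := by positivity
  have he1 : Real.exp (-Δ ^ 2 / 2) < 1 := by
    rw [Real.exp_lt_one_iff]; nlinarith
  have he0 : 0 < Real.exp (-Δ ^ 2 / 2) := Real.exp_pos _
  have hlt : Real.exp (-Δ ^ 2 / 2) * (1 - lam) < 1 := by nlinarith
  refine ⟨hlt, ?_⟩
  -- exp(-x) ≤ 1/(1+x)
  have hexp : Real.exp (-Δ ^ 2 / 2) * (Δ ^ 2 + 2) ≤ 2 := by
    have h1 : x + 1 ≤ Real.exp x := Real.add_one_le_exp x
    have h2 : Real.exp (-Δ ^ 2 / 2) = 1 / Real.exp x := by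
      rw [hx, one_div, ← Real.exp_neg]; congr 1; ring
    rw [h2]
    rw [div_mul_eq_mul_div, div_le_iff₀ (Real.exp_pos x)]
    nlinarith [Real.exp_pos x]
  have hd1 : 0 < 1 - Real.exp (-Δ ^ 2 / 2) * (1 - lam) := by linarith
  have hd2 : 0 < Δ ^ 2 + 2 * lam := by positivity
  rw [div_le_div_iff₀ hd1 hd2]
  nlinarith [mul_nonneg he0.le hl0.le]
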